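/- arXiv:2102.06188 — 5 statements merged into one kernel-verified Lean document; each statement's English description precedes it below -/
import Mathlib

section
/- Let n ≥ 2, let D ⊆ {1,…,n−1}, let j ∈ {1,…,n−1}, and set v := Σ_{w ∈ W_D} w·α_j ∈ ℚ^n. Then: (i) 0 ≤ v, i.e. v is a ℚ≥0-linear combination of the simple roots α_1,…,α_{n−1}; (ii) v = 0 if and only if j ∈ D; (iii) if j ∉ D then j ∈ supp(v), and in fact |W_D|·α_j ≤ v. (Paper: Lemma 'sumw' in §2.2, for G = GL_n.) -/
/-!
Setup (§2.2 of the paper, for `G = GL_n`): the symmetric group `S_n` acts on `ℚ^n` by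
permuting coordinates, `(w • v) k = v (w⁻¹ k)`.  Coordinates are indexed by `Fin n`
(`0`-based), so the simple roots are `α i = e i − e (i+1)` for `i ∈ {0, …, n−2}`
(the paper's `α_{i+1}`), subsets of simple roots are subsets of
`{0, …, n−2} = Finset.range (n−1)`, and `θ = (n−1, n−2, …, 1, 0)`.
-/

namespace BHHMS

/-- The standard basis vector `e i` of `ℚ^n`. -/
def stde (n i : ℕ) : Fin n → ℚ := fun k => if (k : ℕ) = i then 1 else 0

/-- The simple root `α i = e i − e (i+1)`, for `i ∈ {0, …, n−2}`. -/
def simpleRoot (n i : ℕ) : Fin n → ℚ := stde n i - stde n (i + 1)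

/-- The action of `S_n` on `ℚ^n` permuting the coordinates: `(w • v) k = v (w⁻¹ k)`. -/
def permAct (n : ℕ) (w : Equiv.Perm (Fin n)) (v : Fin n → ℚ) : Fin n → ℚ :=
  fun k => v (w⁻¹ k)

/-- `v ≤ v'` iff `v' − v` is a `ℚ≥0`-linear combination of the simple roots. -/
def rootLE (n : ℕ) (v v' : Fin n → ℚ) : Prop :=
  ∃ c : ℕ → ℚ, (∀ i, 0 ≤ c i) ∧ v' - v = ∑ i ∈ Finset.range (n - 1), c i • simpleRoot n i

/-- `v` is dominant iff `v 0 ≥ v 1 ≥ … ≥ v (n−1)`. -/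
def Dominant (n : ℕ) (v : Fin n → ℚ) : Prop := ∀ i j : Fin n, i ≤ j → v j ≤ v i

/-- The adjacent transposition `s i = (i, i+1)` (junk value `1` if `i + 1 ≥ n`). -/
def adjSwap (n i : ℕ) : Equiv.Perm (Fin n) :=
  if h : i + 1 < n then Equiv.swap ⟨i, Nat.lt_of_succ_lt h⟩ ⟨i + 1, h⟩ else 1

/-- The subgroup `W_D ⊆ S_n` generated by the `s i` for `i ∈ D`. -/
def WD (n : ℕ) (D : Finset ℕ) : Subgroup (Equiv.Perm (Fin n)) :=
  Subgroup.closure (adjSwap n '' ↑D)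

/-- `Σ_{w ∈ W_D} w·v`. -/
noncomputable def WDsum (n : ℕ) (D : Finset ℕ) (v : Fin n → ℚ) : Fin n → ℚ :=
  ∑ᶠ w ∈ WD n D, permAct n w v

/-- The `W_D`-average `λ'_D = |W_D|⁻¹ Σ_{w ∈ W_D} w·λ`. -/
noncomputable def avg (n : ℕ) (D : Finset ℕ) (v : Fin n → ℚ) : Fin n → ℚ :=
  ((Nat.card ↥(WD n D) : ℚ))⁻¹ • WDsum n D v

/-- For `v` of coordinate sum `0`, writing `v = Σ_i c_i • α_i` one has
`c_i = v 0 + ⋯ + v i`; then `supp v = {i : c_i ≠ 0}`. -/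
def suppOf (n : ℕ) (v : Fin n → ℚ) : Finset ℕ :=
  (Finset.range (n - 1)).filter fun i => (∑ k : Fin n, if (k : ℕ) ≤ i then v k else 0) ≠ 0

/-- `w` is `D`-admissible iff `w (i+1) = w i + 1` for every `i ∈ D`. -/
def IsAdmissible (n : ℕ) (D : Finset ℕ) (w : Equiv.Perm (Fin n)) : Prop :=
  ∀ i ∈ D, ∀ h : i + 1 < n,
    ((w ⟨i + 1, h⟩ : Fin n) : ℕ) = ((w ⟨i, Nat.lt_of_succ_lt h⟩ : Fin n) : ℕ) + 1

/-- The image `w(D) = {w i : i ∈ D}` as a subset of `ℕ`. -/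
def permImage (n : ℕ) (w : Equiv.Perm (Fin n)) (D : Finset ℕ) : Finset ℕ :=
  D.image fun i => if h : i < n then ((w ⟨i, h⟩ : Fin n) : ℕ) else i

/-- `θ = (n−1, n−2, …, 1, 0)`. -/
def theta (n : ℕ) : Fin n → ℚ := fun k => (n : ℚ) - 1 - ((k : ℕ) : ℚ)

/-- A vector of `ℤ^n` seen in `ℚ^n`. -/
def ratVec (n : ℕ) (lam : Fin n → ℤ) : Fin n → ℚ := fun k => ((lam k : ℤ) : ℚ)

/-- `λ ∈ ℤ^n` satisfies `(H_f)` iff `σ·λ ≤ fθ` for every `σ ∈ S_n`. -/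
def SatisfiesHf (n f : ℕ) (lam : Fin n → ℤ) : Prop :=
  ∀ σ : Equiv.Perm (Fin n), rootLE n (permAct n σ (ratVec n lam)) ((f : ℚ) • theta n)

-- AUX START
section Aux

open Finset

/-- Partial sum `v 0 + ⋯ + v i`. -/
def psum {n : ℕ} (v : Fin n → ℚ) (i : ℕ) : ℚ :=
  ∑ k : Fin n, if (k : ℕ) ≤ i then v k else 0

lemma psum_finset_sum {n : ℕ} {ι : Type*} (s : Finset ι) (f : ι → Fin n → ℚ) (i : ℕ) :
    psum (∑ w ∈ s, f w) i = ∑ w ∈ s, psum (f w) i := by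
  unfold psum
  simp only [Finset.sum_apply]
  rw [Finset.sum_comm (γ := ι)]
  · apply Finset.sum_congr rfl
    intro k _
    split_ifs <;> simp

lemma psum_sub {n : ℕ} (u v : Fin n → ℚ) (i : ℕ) :
    psum (u - v) i = psum u i - psum v i := by
  unfold psum
  rw [← Finset.sum_sub_distrib]
  apply Finset.sum_congr rfl
  intro k _
  split_ifs <;> simp

lemma psum_smul {n : ℕ} (r : ℚ) (v : Fin n → ℚ) (i : ℕ) :
    psum (r • v) i = r * psum v i := by
  unfold psum
  rw [Finset.mul_sum]
  apply Finset.sum_congr rfl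
  intro k _
  split_ifs <;> simp

lemma psum_succ {n : ℕ} (u : Fin n → ℚ) (m : ℕ) (h : m + 1 < n) :
    psum u (m + 1) = psum u m + u ⟨m + 1, h⟩ := by
  unfold psum
  have : ∀ k : Fin n, (if (k : ℕ) ≤ m + 1 then u k else 0)
      = (if (k : ℕ) ≤ m then u k else 0) + (if k = ⟨m + 1, h⟩ then u k else 0) := by
    intro k
    by_cases hk : k = ⟨m + 1, h⟩
    · subst hk; simp
    · have hk' : (k : ℕ) ≠ m + 1 := fun hh => hk (Fin.ext hh)
      rw [if_neg hk]
      split_ifs <;> first | omega | ring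
  simp_rw [this]
  rw [Finset.sum_add_distrib, Finset.sum_ite_eq' Finset.univ (⟨m + 1, h⟩ : Fin n) u]
  simp

lemma psum_zeroth {n : ℕ} (hn : 0 < n) (u : Fin n → ℚ) :
    psum u 0 = u ⟨0, hn⟩ := by
  unfold psum
  have : ∀ k : Fin n, (if (k : ℕ) ≤ 0 then u k else 0)
      = (if k = ⟨0, hn⟩ then u k else 0) := by
    intro k
    by_cases hk : k = ⟨0, hn⟩
    · subst hk; simp
    · have hk' : (k : ℕ) ≠ 0 := fun hh => hk (Fin.ext hh)
      rw [if_neg (by omega), if_neg hk]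
  simp_rw [this]
  rw [Finset.sum_ite_eq' Finset.univ (⟨0, hn⟩ : Fin n) u]
  simp

lemma psum_last {n : ℕ} (u : Fin n → ℚ) (i : ℕ) (h : n - 1 ≤ i) :
    psum u i = ∑ k : Fin n, u k := by
  unfold psum
  apply Finset.sum_congr rfl
  intro k _
  rw [if_pos (by have := k.isLt; omega)]

/-- Decomposition of a sum-zero vector in terms of simple roots with partial-sum
coefficients. -/
lemma eq_sum_psum_smul {n : ℕ} (hn : 2 ≤ n) (u : Fin n → ℚ) (hsum : ∑ k : Fin n, u k = 0) :
    u = ∑ i ∈ Finset.range (n - 1), psum u i • BHHMS.simpleRoot n i := by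
  funext k
  rw [Finset.sum_apply]
  simp only [Pi.smul_apply, smul_eq_mul, BHHMS.simpleRoot, Pi.sub_apply, BHHMS.stde,
    mul_sub, mul_ite, mul_one, mul_zero]
  rw [Finset.sum_sub_distrib]
  obtain ⟨kv, hkv⟩ := k
  rcases kv with _ | m
  · have h0 : ((⟨0, hkv⟩ : Fin n) : ℕ) = 0 := rfl
    simp only [h0]
    rw [Finset.sum_ite_eq (Finset.range (n - 1)) 0 (fun i => psum u i),
      if_pos (Finset.mem_range.mpr (by omega))]
    rw [Finset.sum_eq_zero (fun i _ => by rw [if_neg (by omega)])]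
    rw [psum_zeroth (by omega) u]
    simp
  · have h0 : ((⟨m + 1, hkv⟩ : Fin n) : ℕ) = m + 1 := rfl
    simp only [h0]
    have hsimp : ∀ i ∈ Finset.range (n - 1),
        (if (m + 1 : ℕ) = i + 1 then psum u i else 0) = (if m = i then psum u i else 0) := by
      intro i _
      split_ifs <;> first | rfl | omega
    rw [Finset.sum_congr rfl hsimp,
      Finset.sum_ite_eq (Finset.range (n - 1)) m (fun i => psum u i),
      if_pos (Finset.mem_range.mpr (by omega)),
      Finset.sum_ite_eq (Finset.range (n - 1)) (m + 1) (fun i => psum u i)]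
    by_cases h : m + 1 < n - 1
    · rw [if_pos (Finset.mem_range.mpr h), psum_succ u m hkv]
      ring
    · rw [if_neg (by simp [Finset.mem_range]; omega)]
      have h1 : psum u (m + 1) = psum u m + u ⟨m + 1, hkv⟩ := psum_succ u m hkv
      have h2 : psum u (m + 1) = 0 := by rw [psum_last u (m + 1) (by omega)]; exact hsum
      have : u ⟨m + 1, hkv⟩ = -psum u m := by linarith
      rw [this]; ring

lemma permAct_mul (n : ℕ) (w u : Equiv.Perm (Fin n)) (v : Fin n → ℚ) :
    BHHMS.permAct n (w * u) v = BHHMS.permAct n w (BHHMS.permAct n u v) := by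
  funext k
  simp [BHHMS.permAct, mul_inv_rev]

lemma sum_permAct (n : ℕ) (w : Equiv.Perm (Fin n)) (v : Fin n → ℚ) :
    ∑ k : Fin n, BHHMS.permAct n w v k = ∑ k : Fin n, v k :=
  Equiv.sum_comp w⁻¹ v

lemma sum_simpleRoot (n j : ℕ) (hj1 : j + 1 < n) :
    ∑ k : Fin n, BHHMS.simpleRoot n j k = 0 := by
  simp only [BHHMS.simpleRoot, Pi.sub_apply, BHHMS.stde]
  rw [Finset.sum_sub_distrib]
  have e1 : ∀ i : ℕ, i < n → ∑ k : Fin n, (if (k : ℕ) = i then (1 : ℚ) else 0) = 1 := by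
    intro i hi
    have : ∀ k : Fin n, (if (k : ℕ) = i then (1 : ℚ) else 0)
        = (if k = ⟨i, hi⟩ then (1 : ℚ) else 0) := by
      intro k
      by_cases hk : k = ⟨i, hi⟩
      · subst hk; simp
      · rw [if_neg (fun hh => hk (Fin.ext hh)), if_neg hk]
    simp_rw [this]
    rw [Finset.sum_ite_eq' Finset.univ (⟨i, hi⟩ : Fin n) (fun _ => (1 : ℚ))]
    simp
  rw [e1 j (by omega), e1 (j + 1) hj1]
  ring

lemma psum_permAct_simpleRoot {n j : ℕ} (hj1 : j + 1 < n) (w : Equiv.Perm (Fin n)) (i : ℕ) :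
    psum (BHHMS.permAct n w (BHHMS.simpleRoot n j)) i =
      (if ((w ⟨j, Nat.lt_of_succ_lt hj1⟩ : Fin n) : ℕ) ≤ i then 1 else 0) -
      (if ((w ⟨j + 1, hj1⟩ : Fin n) : ℕ) ≤ i then 1 else 0) := by
  unfold psum BHHMS.permAct
  rw [← Equiv.sum_comp w (fun k => if ((k : Fin n) : ℕ) ≤ i then BHHMS.simpleRoot n j (w⁻¹ k) else 0)]
  simp only [Equiv.Perm.coe_inv, Equiv.symm_apply_apply]
  have key : ∀ m : Fin n, (if ((w m : Fin n) : ℕ) ≤ i then BHHMS.simpleRoot n j m else 0)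
      = (if m = ⟨j, Nat.lt_of_succ_lt hj1⟩ then (if ((w m : Fin n) : ℕ) ≤ i then (1 : ℚ) else 0) else 0)
        - (if m = ⟨j + 1, hj1⟩ then (if ((w m : Fin n) : ℕ) ≤ i then (1 : ℚ) else 0) else 0) := by
    intro m
    by_cases h1 : m = ⟨j, Nat.lt_of_succ_lt hj1⟩
    · have hne : m ≠ ⟨j + 1, hj1⟩ := by
        subst h1
        intro hh
        have := congrArg Fin.val hh
        simp only [Fin.val_mk] at this
        omega
      have hα : BHHMS.simpleRoot n j m = 1 := by
        subst h1
        simp [BHHMS.simpleRoot, BHHMS.stde]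
      rw [hα, if_pos h1, if_neg hne, sub_zero]
    · by_cases h2 : m = ⟨j + 1, hj1⟩
      · have hα : BHHMS.simpleRoot n j m = -1 := by
          subst h2
          simp [BHHMS.simpleRoot, BHHMS.stde]
          try omega
        rw [hα, if_neg h1, if_pos h2, zero_sub]
        split_ifs <;> norm_num
      · have hm1 : (m : ℕ) ≠ j := fun hh => h1 (Fin.ext hh)
        have hm2 : (m : ℕ) ≠ j + 1 := fun hh => h2 (Fin.ext hh)
        have hα : BHHMS.simpleRoot n j m = 0 := by
          simp [BHHMS.simpleRoot, BHHMS.stde, hm1, hm2]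
        rw [hα, if_neg h1, if_neg h2]
        simp
  rw [Finset.sum_congr rfl (fun m _ => key m), Finset.sum_sub_distrib,
    Finset.sum_ite_eq' Finset.univ (⟨j, Nat.lt_of_succ_lt hj1⟩ : Fin n),
    Finset.sum_ite_eq' Finset.univ (⟨j + 1, hj1⟩ : Fin n)]
  simp

lemma psum_simpleRoot {n j : ℕ} (hj1 : j + 1 < n) (i : ℕ) :
    psum (BHHMS.simpleRoot n j) i =
      (if j ≤ i then 1 else 0) - (if j + 1 ≤ i then 1 else 0) := by
  have := psum_permAct_simpleRoot hj1 1 i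
  rw [show BHHMS.permAct n 1 (BHHMS.simpleRoot n j) = BHHMS.simpleRoot n j from rfl] at this
  simp only [Equiv.Perm.one_apply] at this
  exact this

lemma permAct_adjSwap_simpleRoot {n j : ℕ} (hj1 : j + 1 < n) :
    BHHMS.permAct n (BHHMS.adjSwap n j) (BHHMS.simpleRoot n j) = -BHHMS.simpleRoot n j := by
  funext k
  simp only [BHHMS.permAct, BHHMS.adjSwap, dif_pos hj1, Equiv.swap_inv, Pi.neg_apply]
  by_cases h1 : k = ⟨j, Nat.lt_of_succ_lt hj1⟩
  · subst h1
    rw [Equiv.swap_apply_left]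
    simp [BHHMS.simpleRoot, BHHMS.stde]
    try omega
  · by_cases h2 : k = ⟨j + 1, hj1⟩
    · subst h2
      rw [Equiv.swap_apply_right]
      simp [BHHMS.simpleRoot, BHHMS.stde]
      try omega
    · rw [Equiv.swap_apply_of_ne_of_ne h1 h2]
      have hm1 : (k : ℕ) ≠ j := fun hh => h1 (Fin.ext hh)
      have hm2 : (k : ℕ) ≠ j + 1 := fun hh => h2 (Fin.ext hh)
      simp [BHHMS.simpleRoot, BHHMS.stde, hm1, hm2]

/-- Elements of `W_D` preserve `{0,…,j}` when `j ∉ D`. -/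
lemma WD_le_iff {n j : ℕ} {D : Finset ℕ} (hD : D ⊆ Finset.range (n - 1)) (hjD : j ∉ D)
    {w : Equiv.Perm (Fin n)} (hw : w ∈ BHHMS.WD n D) (k : Fin n) :
    ((w k : Fin n) : ℕ) ≤ j ↔ (k : ℕ) ≤ j := by
  revert k
  refine Subgroup.closure_induction
    (p := fun x _ => ∀ k : Fin n, ((x k : Fin n) : ℕ) ≤ j ↔ (k : ℕ) ≤ j) ?_ ?_ ?_ ?_ hw
  · rintro x ⟨i, hiD, rfl⟩ k
    have hiD' : i ∈ D := hiD
    have hi : i < n - 1 := Finset.mem_range.mp (hD hiD')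
    have hij : i ≠ j := fun h => hjD (h ▸ hiD')
    have hi1 : i + 1 < n := by omega
    simp only [BHHMS.adjSwap, dif_pos hi1]
    rw [Equiv.swap_apply_def]
    split_ifs with ha hb
    · have : (k : ℕ) = i := congrArg Fin.val ha
      simp only [Fin.val_mk]
      omega
    · have : (k : ℕ) = i + 1 := congrArg Fin.val hb
      simp only [Fin.val_mk]
      omega
    · rfl
  · intro k; rfl
  · intro x y _ _ hx hy k
    rw [Equiv.Perm.mul_apply]
    exact (hx (y k)).trans (hy k)
  · intro x _ hx k
    rw [← hx (x⁻¹ k), ← Equiv.Perm.mul_apply, mul_inv_cancel, Equiv.Perm.one_apply]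

lemma indicator_ineq (a b i j : ℕ) (ha : a ≤ j) (hb : j < b) :
    (if j ≤ i then (1 : ℚ) else 0) - (if j + 1 ≤ i then 1 else 0) ≤
      (if a ≤ i then (1 : ℚ) else 0) - (if b ≤ i then 1 else 0) := by
  split_ifs <;> first | omega | norm_num

end Aux
-- AUX END
/-- Lemma `sumw`, §2.2, for `G = GL_n`.  Let `n ≥ 2`, `D ⊆ {0,…,n−2}`,
`j ∈ {0,…,n−2}` and set `v := Σ_{w ∈ W_D} w·α_j`.  Then (i) `0 ≤ v`; (ii) `v = 0` iff
`j ∈ D`; (iii) if `j ∉ D`, then `j ∈ supp v` and in fact `|W_D|·α_j ≤ v`. -/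
theorem statement0 (n : ℕ) (hn : 2 ≤ n) (D : Finset ℕ) (hD : D ⊆ Finset.range (n - 1))
    (j : ℕ) (hj : j ∈ Finset.range (n - 1)) :
    rootLE n 0 (WDsum n D (simpleRoot n j)) ∧
    (WDsum n D (simpleRoot n j) = 0 ↔ j ∈ D) ∧
    (j ∉ D →
      j ∈ suppOf n (WDsum n D (simpleRoot n j)) ∧
        rootLE n ((Nat.card ↥(WD n D) : ℚ) • simpleRoot n j) (WDsum n D (simpleRoot n j))) := by
  classical
  have hjr : j < n - 1 := Finset.mem_range.mp hj
  have hj1 : j + 1 < n := by omega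
  have hWfin : ((WD n D : Set (Equiv.Perm (Fin n)))).Finite := Set.toFinite _
  have hmem : ∀ w, w ∈ hWfin.toFinset ↔ w ∈ WD n D := by
    intro w; rw [Set.Finite.mem_toFinset]; rfl
  set Wfin : Finset (Equiv.Perm (Fin n)) := hWfin.toFinset with hWf
  have hWDsum : WDsum n D (simpleRoot n j) = ∑ w ∈ Wfin, permAct n w (simpleRoot n j) := by
    have : WDsum n D (simpleRoot n j)
        = ∑ᶠ w ∈ (WD n D : Set (Equiv.Perm (Fin n))), permAct n w (simpleRoot n j) := rfl
    rw [this, finsum_mem_eq_finite_toFinset_sum _ hWfin]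
  set S : Fin n → ℚ := WDsum n D (simpleRoot n j) with hS
  have htot : ∑ k : Fin n, S k = 0 := by
    rw [hWDsum]
    simp only [Finset.sum_apply]
    rw [Finset.sum_comm]
    apply Finset.sum_eq_zero
    intro w _
    rw [sum_permAct, sum_simpleRoot n j hj1]
  have hcard : (Nat.card ↥(WD n D) : ℕ) = Wfin.card := by
    have h1 : Nat.card ↥(WD n D)
        = Nat.card ↥(WD n D : Set (Equiv.Perm (Fin n))) := rfl
    rw [h1, Nat.card_coe_set_eq, Set.ncard_eq_toFinset_card _ hWfin]
  by_cases hjD : j ∈ D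
  · -- j ∈ D : the sum vanishes
    have hσ : adjSwap n j ∈ WD n D :=
      Subgroup.subset_closure ⟨j, by simpa using hjD, rfl⟩
    have hre : ∑ w ∈ Wfin, permAct n w (simpleRoot n j)
        = ∑ w ∈ Wfin, permAct n (w * adjSwap n j) (simpleRoot n j) := by
      apply Finset.sum_nbij' (i := fun w => w * (adjSwap n j)⁻¹) (j := fun w => w * adjSwap n j)
      · intro a ha
        rw [hmem] at ha ⊢
        exact mul_mem ha (inv_mem hσ)
      · intro a ha
        rw [hmem] at ha ⊢
        exact mul_mem ha hσ
      · intro a _; group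
      · intro a _; group
      · intro a _
        congr 1
        group
    have hzero : S = 0 := by
      have hneg : S = -S := by
        rw [hWDsum]
        nth_rewrite 1 [hre]
        rw [← Finset.sum_neg_distrib]
        apply Finset.sum_congr rfl
        intro w _
        rw [permAct_mul, permAct_adjSwap_simpleRoot hj1]
        funext k
        simp [permAct]
      funext k
      have := congrFun hneg k
      have h0 : S k = -S k := this
      simp only [Pi.zero_apply]
      linarith
    refine ⟨?_, by simp [hzero, hjD], fun h => absurd hjD h⟩
    rw [hzero]
    exact ⟨0, fun i => le_rfl, by simp⟩
  · -- j ∉ D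
    have hfix : ∀ w ∈ Wfin, ((w ⟨j, Nat.lt_of_succ_lt hj1⟩ : Fin n) : ℕ) ≤ j
        ∧ ¬ ((w ⟨j + 1, hj1⟩ : Fin n) : ℕ) ≤ j := by
      intro w hw
      rw [hmem] at hw
      constructor
      · exact (WD_le_iff hD hjD hw _).mpr (by simp)
      · intro hcon
        have := (WD_le_iff hD hjD hw (⟨j + 1, hj1⟩ : Fin n)).mp hcon
        simp at this
    have hpsum : ∀ i : ℕ, psum S i = ∑ w ∈ Wfin,
        ((if ((w ⟨j, Nat.lt_of_succ_lt hj1⟩ : Fin n) : ℕ) ≤ i then (1 : ℚ) else 0) -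
         (if ((w ⟨j + 1, hj1⟩ : Fin n) : ℕ) ≤ i then 1 else 0)) := by
      intro i
      rw [hWDsum, psum_finset_sum]
      exact Finset.sum_congr rfl fun w _ => psum_permAct_simpleRoot hj1 w i
    have hpos : ∀ i : ℕ, 0 ≤ psum S i := by
      intro i
      rw [hpsum i]
      apply Finset.sum_nonneg
      intro w hw
      obtain ⟨ha, hb⟩ := hfix w hw
      split_ifs with h1 h2 h2 <;> try norm_num
      omega
    have hatj : psum S j = (Wfin.card : ℚ) := by
      rw [hpsum j]
      have hterm : ∀ w ∈ Wfin,
          ((if ((w ⟨j, Nat.lt_of_succ_lt hj1⟩ : Fin n) : ℕ) ≤ j then (1 : ℚ) else 0) -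
           (if ((w ⟨j + 1, hj1⟩ : Fin n) : ℕ) ≤ j then (1 : ℚ) else 0)) = 1 := by
        intro w hw
        obtain ⟨ha, hb⟩ := hfix w hw
        rw [if_pos ha, if_neg hb, sub_zero]
      rw [Finset.sum_congr rfl hterm, Finset.sum_const, nsmul_eq_mul, mul_one]
    have hcardpos : 0 < Wfin.card :=
      Finset.card_pos.mpr ⟨1, (hmem 1).mpr (one_mem _)⟩
    have hSne : psum S j ≠ 0 := by
      rw [hatj]
      exact Nat.cast_ne_zero.mpr hcardpos.ne'
    refine ⟨⟨fun i => psum S i, hpos, by rw [sub_zero]; exact eq_sum_psum_smul hn S htot⟩, ?_, ?_⟩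
    · constructor
      · intro h0
        exfalso
        apply hSne
        rw [h0]
        simp [psum]
      · intro h
        exact absurd h hjD
    · intro _
      constructor
      · rw [suppOf, Finset.mem_filter]
        exact ⟨hj, hSne⟩
      · set q : ℚ := ((Nat.card ↥(WD n D) : ℕ) : ℚ) with hq
        have hqcard : q = (Wfin.card : ℚ) := by rw [hq, hcard]
        refine ⟨fun i => psum (S - q • simpleRoot n j) i, ?_, ?_⟩
        · intro i
          show 0 ≤ psum (S - q • simpleRoot n j) i
          rw [psum_sub, psum_smul, psum_simpleRoot hj1, hpsum i, hqcard,
            show ((Wfin.card : ℚ)) = ∑ _w ∈ Wfin, (1 : ℚ) by simp, Finset.sum_mul,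
            ← Finset.sum_sub_distrib]
          apply Finset.sum_nonneg
          intro w hw
          obtain ⟨ha, hb⟩ := hfix w hw
          rw [one_mul]
          have hineq := indicator_ineq _ _ i j ha (not_le.mp hb)
          linarith [hineq]
        · have hmain := eq_sum_psum_smul hn (S - q • simpleRoot n j) ?_
          · exact hmain
          · simp only [Pi.sub_apply, Pi.smul_apply, smul_eq_mul]
            rw [Finset.sum_sub_distrib, htot, ← Finset.mul_sum, sum_simpleRoot n j hj1]
            ring

end BHHMS
end

section
/- Let n ≥ 2, f ≥ 1, D ⊆ {1,…,n−1}, and let λ ∈ ℤ^n satisfy (H_f). Let w and w' be two D-admissible permutations such that both w·λ'_D and w'·λ'_D are dominant. Then w'∘w⁻¹ lies in the subgroup of S_n generated by the adjacent transpositions s_k for k ∈ supp(fθ − w·λ'_D). (Paper: Lemma 'inclusion' in §2.2, for G = GL_n: W(C_P) ⊆ W(P(C_P))·w.) -/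
/-!
Setup (§2.2 of the paper, for `G = GL_n`): the symmetric group `S_n` acts on `ℚ^n` by
permuting coordinates, `(w • v) k = v (w⁻¹ k)`.  Coordinates are indexed by `Fin n`
(`0`-based), so the simple roots are `α i = e i − e (i+1)` for `i ∈ {0, …, n−2}`
(the paper's `α_{i+1}`), subsets of simple roots are subsets of
`{0, …, n−2} = Finset.range (n−1)`, and `θ = (n−1, n−2, …, 1, 0)`.
-/

namespace BHHMS

/-! Auxiliary lemmas -/

lemma adjSwap_apply_of_ne (n a : ℕ) (ha : a + 1 < n) (x : Fin n)
    (h1 : (x : ℕ) ≠ a) (h2 : (x : ℕ) ≠ a + 1) : adjSwap n a x = x := by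
  rw [adjSwap, dif_pos ha]
  exact Equiv.swap_apply_of_ne_of_ne (fun h => h1 (by rw [h])) (fun h => h2 (by rw [h]))

lemma adjSwap_mul_self (n a : ℕ) : adjSwap n a * adjSwap n a = 1 := by
  rw [adjSwap]
  split_ifs with h
  · exact Equiv.swap_mul_self _ _
  · exact one_mul 1

lemma nu_adjSwap {n : ℕ} (ν : Fin n → ℚ) (a : ℕ) (ha : a + 1 < n)
    (he : ν ⟨a, Nat.lt_of_succ_lt ha⟩ = ν ⟨a + 1, ha⟩) (y : Fin n) :
    ν (adjSwap n a y) = ν y := by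
  rw [adjSwap, dif_pos ha, Equiv.swap_apply_def]
  split_ifs with h1 h2
  · rw [h1, ← he]
  · rw [h2, he]
  · rfl

/-- The stabilizer of a dominant vector is generated by the adjacent transpositions at
equal adjacent coordinates (stated relative to any set `S` containing those). -/
lemma stab_mem {n : ℕ} (ν : Fin n → ℚ) (hdom : Dominant n ν)
    (S : Set (Equiv.Perm (Fin n)))
    (hS : ∀ k, ∀ h : k + 1 < n, ν ⟨k, Nat.lt_of_succ_lt h⟩ = ν ⟨k + 1, h⟩ → adjSwap n k ∈ S) :
    ∀ N, N ≤ n → ∀ σ : Equiv.Perm (Fin n),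
      (∀ x : Fin n, N ≤ (x : ℕ) → σ x = x) → (∀ x, ν (σ x) = ν x) →
      σ ∈ Subgroup.closure S := by
  intro N
  induction N with
  | zero =>
    intro _ σ hfix _
    have : σ = 1 := Equiv.ext fun x => hfix x (Nat.zero_le _)
    rw [this]; exact Subgroup.one_mem _
  | succ N ih =>
    intro hNn σ hfixσ hνσ
    have hNlt : N < n := hNn
    set m : Fin n := ⟨N, hNlt⟩ with hm
    have hbound : ∀ τ : Equiv.Perm (Fin n),
        (∀ x : Fin n, N + 1 ≤ (x : ℕ) → τ x = x) → ((τ m : Fin n) : ℕ) ≤ N := by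
      intro τ hτ
      by_contra hgt
      push_neg at hgt
      have h1 : τ (τ m) = τ m := hτ _ hgt
      have h2 := τ.injective h1
      rw [h2] at hgt
      simp [hm] at hgt
    have base : ∀ τ : Equiv.Perm (Fin n),
        (∀ x : Fin n, N + 1 ≤ (x : ℕ) → τ x = x) → (∀ x, ν (τ x) = ν x) →
        ((τ m : Fin n) : ℕ) = N → τ ∈ Subgroup.closure S := by
      intro τ hfixτ hντ hτm
      have hτmm : τ m = m := Fin.ext (by simpa [hm] using hτm)
      refine ih (Nat.le_of_succ_le hNn) τ ?_ hντ
      intro x hx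
      rcases Nat.eq_or_lt_of_le hx with h | h
      · have : x = m := Fin.ext (by simp [hm, ← h])
        rw [this]; exact hτmm
      · exact hfixτ x h
    have inner : ∀ k, ∀ τ : Equiv.Perm (Fin n),
        (∀ x : Fin n, N + 1 ≤ (x : ℕ) → τ x = x) → (∀ x, ν (τ x) = ν x) →
        N - ((τ m : Fin n) : ℕ) ≤ k → τ ∈ Subgroup.closure S := by
      intro k
      induction k with
      | zero =>
        intro τ hfixτ hντ hk
        exact base τ hfixτ hντ (le_antisymm (hbound τ hfixτ) (by omega))
      | succ k ihk =>
        intro τ hfixτ hντ hk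
        have haN : ((τ m : Fin n) : ℕ) ≤ N := hbound τ hfixτ
        rcases eq_or_lt_of_le haN with heq | hlt
        · exact base τ hfixτ hντ heq
        · set a : ℕ := ((τ m : Fin n) : ℕ) with ha
          have ha1 : a + 1 < n := by omega
          have hτma : τ m = ⟨a, Nat.lt_of_succ_lt ha1⟩ := Fin.ext rfl
          have hνa : ν ⟨a, Nat.lt_of_succ_lt ha1⟩ = ν m := by
            rw [← hτma]; exact hντ m
          have hνa1 : ν ⟨a, Nat.lt_of_succ_lt ha1⟩ = ν ⟨a + 1, ha1⟩ := by
            refine le_antisymm ?_ (hdom _ _ (by simp))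
            calc ν ⟨a, _⟩ = ν m := hνa
              _ ≤ ν ⟨a + 1, ha1⟩ := hdom _ _ (by simp [hm]; omega)
          have hsw : adjSwap n a ∈ S := hS a ha1 hνa1
          set τ' := adjSwap n a * τ with hτ'
          have hfixτ' : ∀ x : Fin n, N + 1 ≤ (x : ℕ) → τ' x = x := by
            intro x hx
            rw [hτ', Equiv.Perm.mul_apply, hfixτ x hx]
            exact adjSwap_apply_of_ne n a ha1 x (by omega) (by omega)
          have hντ' : ∀ x, ν (τ' x) = ν x := by
            intro x
            rw [hτ', Equiv.Perm.mul_apply, nu_adjSwap ν a ha1 hνa1, hντ]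
          have hτ'm : ((τ' m : Fin n) : ℕ) = a + 1 := by
            rw [hτ', Equiv.Perm.mul_apply, hτma, adjSwap, dif_pos ha1,
              Equiv.swap_apply_left]
          have hmem' : τ' ∈ Subgroup.closure S := ihk τ' hfixτ' hντ' (by omega)
          have : τ = adjSwap n a * τ' := by
            rw [hτ', ← mul_assoc, adjSwap_mul_self, one_mul]
          rw [this]
          exact Subgroup.mul_mem _ (Subgroup.subset_closure hsw) hmem'
    exact inner (N + 1) σ hfixσ hνσ (by omega)

lemma sum_stde (n j k : ℕ) (hj : j < n) :
    (∑ x : Fin n, if (x : ℕ) ≤ k then stde n j x else 0) = if j ≤ k then 1 else 0 := by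
  rw [Fintype.sum_eq_single (⟨j, hj⟩ : Fin n)]
  · simp [stde]
  · intro x hx
    have : (x : ℕ) ≠ j := fun h => hx (Fin.ext h)
    simp [stde, this]

lemma partial_sum_eq (n : ℕ) (C : ℕ → ℚ) (k : ℕ) (hk : k < n - 1) :
    (∑ x : Fin n, if (x : ℕ) ≤ k then
      (∑ i ∈ Finset.range (n - 1), C i • simpleRoot n i) x else 0) = C k := by
  have step1 : ∀ x : Fin n,
      (if (x : ℕ) ≤ k then (∑ i ∈ Finset.range (n - 1), C i • simpleRoot n i) x else 0)
      = ∑ i ∈ Finset.range (n - 1), (if (x : ℕ) ≤ k then C i * simpleRoot n i x else 0) := by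
    intro x
    split_ifs with h
    · simp [Finset.sum_apply]
    · simp
  rw [Finset.sum_congr rfl fun x _ => step1 x, Finset.sum_comm]
  have step2 : ∀ i ∈ Finset.range (n - 1),
      (∑ x : Fin n, if (x : ℕ) ≤ k then C i * simpleRoot n i x else 0)
      = if i = k then C k else 0 := by
    intro i hi
    have hi' : i < n - 1 := Finset.mem_range.mp hi
    have h1 : i < n := by omega
    have h2 : i + 1 < n := by omega
    have e1 : (∑ x : Fin n, if (x : ℕ) ≤ k then C i * simpleRoot n i x else 0)
        = C i * ((∑ x : Fin n, if (x : ℕ) ≤ k then stde n i x else 0)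
          - (∑ x : Fin n, if (x : ℕ) ≤ k then stde n (i + 1) x else 0)) := by
      rw [mul_sub, Finset.mul_sum, Finset.mul_sum, ← Finset.sum_sub_distrib]
      refine Finset.sum_congr rfl fun x _ => ?_
      split_ifs with h <;> simp [simpleRoot, mul_sub]
    rw [e1, sum_stde n i k h1, sum_stde n (i + 1) k h2]
    rcases lt_trichotomy i k with h | h | h
    · rw [if_pos (by omega), if_pos (by omega), if_neg (by omega)]; ring
    · rw [if_pos (by omega), if_neg (by omega), if_pos h, h]; ring
    · rw [if_neg (by omega), if_neg (by omega), if_neg (by omega)]; ring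
  rw [Finset.sum_congr rfl step2, Finset.sum_ite_eq' (Finset.range (n - 1)) k fun _ => C k,
    if_pos (Finset.mem_range.mpr hk)]

lemma coord_eq (n : ℕ) (C : ℕ → ℚ) (x : Fin n) :
    (∑ i ∈ Finset.range (n - 1), C i • simpleRoot n i) x
    = (if (x : ℕ) < n - 1 then C x else 0) - (if 1 ≤ (x : ℕ) then C ((x : ℕ) - 1) else 0) := by
  have e0 : (∑ i ∈ Finset.range (n - 1), C i • simpleRoot n i) x
      = ∑ i ∈ Finset.range (n - 1),
        ((if (x : ℕ) = i then C i else 0) - (if (x : ℕ) = i + 1 then C i else 0)) := by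
    rw [Finset.sum_apply]
    refine Finset.sum_congr rfl fun i _ => ?_
    simp only [Pi.smul_apply, smul_eq_mul, simpleRoot, Pi.sub_apply, stde, mul_sub]
    split_ifs <;> ring
  rw [e0, Finset.sum_sub_distrib]
  congr 1
  · rw [Finset.sum_ite_eq (Finset.range (n - 1)) (x : ℕ) fun i => C i]
    simp [Finset.mem_range]
  · by_cases hx : 1 ≤ (x : ℕ)
    · rw [if_pos hx]
      rw [Finset.sum_eq_single_of_mem ((x : ℕ) - 1)
        (Finset.mem_range.mpr (by omega)) ?_]
      · rw [if_pos (by omega)]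
      · intro i _ hi
        rw [if_neg (by omega)]
    · rw [if_neg hx]
      refine Finset.sum_eq_zero fun i _ => ?_
      rw [if_neg (by omega)]

/-- Lemma `inclusion`, §2.2, for `G = GL_n`: `W(C_P) ⊆ W(P(C_P))·w`.
If `w, w'` are two `D`-admissible permutations with `w·λ'_D` and `w'·λ'_D` dominant, then
`w' ∘ w⁻¹` lies in the subgroup generated by the `s k`, `k ∈ supp (fθ − w·λ'_D)`. -/
theorem statement5 (n f : ℕ) (hn : 2 ≤ n) (hf : 1 ≤ f) (D : Finset ℕ)
    (hD : D ⊆ Finset.range (n - 1)) (lam : Fin n → ℤ) (hlam : SatisfiesHf n f lam)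
    (w w' : Equiv.Perm (Fin n)) (hw : IsAdmissible n D w) (hw' : IsAdmissible n D w')
    (hdomw : Dominant n (permAct n w (avg n D (ratVec n lam))))
    (hdomw' : Dominant n (permAct n w' (avg n D (ratVec n lam)))) :
    w' * w⁻¹ ∈ Subgroup.closure
      (adjSwap n '' ↑(suppOf n ((f : ℚ) • theta n - permAct n w (avg n D (ratVec n lam))))) := by
  classical
  set μ := avg n D (ratVec n lam) with hμ
  set ν := permAct n w μ with hνdef
  -- Step 1: the two dominant rearrangements coincide.
  have hνν' : permAct n w' μ = ν := by
    have h1 : Monotone ((-μ) ∘ ⇑(w⁻¹ : Equiv.Perm (Fin n))) := by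
      intro i j hij
      simp only [Function.comp_apply, Pi.neg_apply, neg_le_neg_iff]
      exact hdomw i j hij
    have h2 : Monotone ((-μ) ∘ ⇑(w'⁻¹ : Equiv.Perm (Fin n))) := by
      intro i j hij
      simp only [Function.comp_apply, Pi.neg_apply, neg_le_neg_iff]
      exact hdomw' i j hij
    have h3 := Tuple.unique_monotone h2 h1
    funext x
    have h4 := congrFun h3 x
    simp only [Function.comp_apply, Pi.neg_apply, neg_inj] at h4
    exact h4
  -- Step 2: `w' * w⁻¹` stabilizes `ν`.
  have hσν : ∀ x, ν ((w' * w⁻¹) x) = ν x := by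
    intro x
    have h1 : ν ((w' * w⁻¹) x) = permAct n w' μ ((w' * w⁻¹) x) := by rw [hνν']
    rw [h1]
    show μ (w'⁻¹ ((w' * w⁻¹) x)) = ν x
    rw [Equiv.Perm.mul_apply, ← Equiv.Perm.mul_apply w'⁻¹ w', inv_mul_cancel, Equiv.Perm.one_apply]
    rfl
  -- Step 3: `ν ≤ fθ` with explicit nonnegative coefficients.
  have hfin : (↑(WD n D) : Set (Equiv.Perm (Fin n))).Finite := Set.toFinite _
  have hTne : (1 : Equiv.Perm (Fin n)) ∈ hfin.toFinset := by
    rw [Set.Finite.mem_toFinset]; exact Subgroup.one_mem _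
  have hcard0 : (0 : ℚ) < (hfin.toFinset.card : ℚ) := by
    exact_mod_cast Finset.card_pos.mpr ⟨1, hTne⟩
  set Q : ℚ := ((hfin.toFinset.card : ℚ))⁻¹ with hQ
  have hνsum : ν = Q • ∑ u ∈ hfin.toFinset, permAct n (w * u) (ratVec n lam) := by
    rw [hνdef, hμ]
    unfold avg WDsum
    have hfs : (∑ᶠ u ∈ WD n D, permAct n u (ratVec n lam))
        = ∑ᶠ u ∈ (↑(WD n D) : Set (Equiv.Perm (Fin n))), permAct n u (ratVec n lam) := rfl
    have hcnat : (Nat.card ↥(WD n D)) = hfin.toFinset.card :=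
      Nat.card_eq_card_finite_toFinset hfin
    rw [hfs, finsum_mem_eq_finite_toFinset_sum _ hfin, hcnat]
    funext k
    show Q * (∑ u ∈ hfin.toFinset, permAct n u (ratVec n lam)) (w⁻¹ k)
        = Q * (∑ u ∈ hfin.toFinset, permAct n (w * u) (ratVec n lam)) k
    congr 1
    rw [Finset.sum_apply, Finset.sum_apply]
    refine Finset.sum_congr rfl fun u _ => ?_
    simp [permAct, mul_inv_rev, Equiv.Perm.mul_apply]
  have hlam' : ∀ σ : Equiv.Perm (Fin n), ∃ c : ℕ → ℚ, (∀ i, 0 ≤ c i) ∧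
      (f : ℚ) • theta n - permAct n σ (ratVec n lam)
        = ∑ i ∈ Finset.range (n - 1), c i • simpleRoot n i := hlam
  choose c hc0 hceq using hlam'
  set C : ℕ → ℚ := fun i => Q * ∑ u ∈ hfin.toFinset, c (w * u) i with hC
  have hC0 : ∀ i, 0 ≤ C i := fun i =>
    mul_nonneg (le_of_lt (inv_pos.mpr hcard0)) (Finset.sum_nonneg fun u _ => hc0 _ i)
  have hθavg : (f : ℚ) • theta n = Q • ∑ _u ∈ hfin.toFinset, (f : ℚ) • theta n := by
    rw [Finset.sum_const, ← Nat.cast_smul_eq_nsmul ℚ, smul_smul,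
      inv_mul_cancel₀ (ne_of_gt hcard0), one_smul]
  have hεeq : (f : ℚ) • theta n - ν = ∑ i ∈ Finset.range (n - 1), C i • simpleRoot n i := by
    calc (f : ℚ) • theta n - ν
        = Q • ∑ u ∈ hfin.toFinset,
            ((f : ℚ) • theta n - permAct n (w * u) (ratVec n lam)) := by
          rw [Finset.sum_sub_distrib, smul_sub, ← hθavg, ← hνsum]
      _ = Q • ∑ u ∈ hfin.toFinset,
            ∑ i ∈ Finset.range (n - 1), c (w * u) i • simpleRoot n i :=
          congrArg _ (Finset.sum_congr rfl fun u _ => hceq (w * u))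
      _ = ∑ i ∈ Finset.range (n - 1), C i • simpleRoot n i := by
          rw [Finset.sum_comm, Finset.smul_sum]
          refine Finset.sum_congr rfl fun i _ => ?_
          rw [← Finset.sum_smul, smul_smul]
  -- Step 4: equal adjacent coordinates of `ν` give elements of the support.
  have expand : ∀ x : Fin n,
      ((f : ℚ) • theta n - ν) x = (f : ℚ) * ((n : ℚ) - 1 - ((x : ℕ) : ℚ)) - ν x := by
    intro x
    simp [theta, smul_eq_mul, mul_sub]
  have hsupp : ∀ k, ∀ h : k + 1 < n, ν ⟨k, Nat.lt_of_succ_lt h⟩ = ν ⟨k + 1, h⟩ →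
      adjSwap n k ∈ adjSwap n '' ↑(suppOf n ((f : ℚ) • theta n - ν)) := by
    intro k h hkeq
    refine ⟨k, ?_, rfl⟩
    rw [Finset.mem_coe, suppOf, Finset.mem_filter]
    refine ⟨Finset.mem_range.mpr (by omega), ?_⟩
    have hps : (∑ x : Fin n, if (x : ℕ) ≤ k then ((f : ℚ) • theta n - ν) x else 0) = C k := by
      rw [hεeq]; exact partial_sum_eq n C k (by omega)
    rw [hps]
    intro hCk
    have e1 := coord_eq n C ⟨k, Nat.lt_of_succ_lt h⟩
    have e2 := coord_eq n C ⟨k + 1, h⟩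
    rw [← hεeq] at e1 e2
    simp only [Fin.val_mk] at e1 e2
    have hε1 : ((f : ℚ) • theta n - ν) ⟨k, Nat.lt_of_succ_lt h⟩ ≤ 0 := by
      rw [e1, if_pos (show k < n - 1 by omega), hCk]
      split_ifs with h'
      · linarith [hC0 (k - 1)]
      · norm_num
    have hε2 : 0 ≤ ((f : ℚ) • theta n - ν) ⟨k + 1, h⟩ := by
      rw [e2, if_pos (show 1 ≤ k + 1 by omega)]
      simp only [Nat.add_sub_cancel, hCk, sub_zero]
      split_ifs with h'
      · exact hC0 (k + 1)
      · exact le_rfl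
    rw [expand] at hε1 hε2
    simp only [Fin.val_mk] at hε1 hε2
    have hf1 : (1 : ℚ) ≤ (f : ℚ) := by exact_mod_cast hf
    push_cast at hε1 hε2
    rw [hkeq] at hε1
    nlinarith [hε1, hε2, hf1]
  -- Step 5: conclude.
  exact stab_mem ν hdomw _ hsupp n le_rfl (w' * w⁻¹)
    (fun x hx => absurd x.isLt (by omega)) hσν


end BHHMS
end

section
/- Let n ≥ 2 and D ⊆ {1,…,n−1}. Every subset X ⊆ R⁺ that is closed relative to D is a closed subset of R⁺, i.e. (i,j) ∈ X and (j,k) ∈ X imply (i,k) ∈ X. (Paper: Lemma 'gln' in §2.3; this uses that for GL_n, if α is a root of the Levi and β a positive root outside the Levi with α+β a root, then α+β = s_α(β).) -/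
/-!
Setup (§2.3 of the paper): `R⁺ = {(i,j) : 1 ≤ i < j ≤ n}` is the set of positive roots
`e_i − e_j` of `GL_n`; subsets closed relative to a subset `D ⊆ {1,…,n−1}` of simple
roots.  Permutations are taken in `Equiv.Perm ℕ`; `W_D` is generated by the
transpositions `(i, i+1)`, `i ∈ D`.
-/

namespace BHHMS

/-- The set of positive roots of `GL_n`: pairs `(i, j)` with `1 ≤ i < j ≤ n`. -/
def Rplus (n : ℕ) : Set (ℕ × ℕ) := {p | 1 ≤ p.1 ∧ p.1 < p.2 ∧ p.2 ≤ n}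

/-- A set of root pairs is closed if `(i,j) ∈ X` and `(j,k) ∈ X` imply `(i,k) ∈ X`. -/
def IsClosedSubset (X : Set (ℕ × ℕ)) : Prop :=
  ∀ i j k : ℕ, (i, j) ∈ X → (j, k) ∈ X → (i, k) ∈ X

/-- The positive roots of the Levi of the standard parabolic `P_D`: the pairs
`(i,j) ∈ R⁺` such that `k ∈ D` for all `i ≤ k ≤ j−1`. -/
def RD (n : ℕ) (D : Finset ℕ) : Set (ℕ × ℕ) :=
  {p ∈ Rplus n | ∀ k : ℕ, p.1 ≤ k → k < p.2 → k ∈ D}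

/-- The subgroup `W_D` of `Equiv.Perm ℕ` generated by the transpositions `(i, i+1)`,
`i ∈ D`. -/
def WDperm (D : Finset ℕ) : Subgroup (Equiv.Perm ℕ) :=
  Subgroup.closure {g | ∃ i ∈ D, g = Equiv.swap i (i + 1)}

/-- The action of a permutation on a pair: `w·(i,j) = (w i, w j)`. -/
def permPair (w : Equiv.Perm ℕ) (p : ℕ × ℕ) : ℕ × ℕ := (w p.1, w p.2)

/-- `X ⊆ R⁺` is closed relative to `D` if `R_D⁺ ⊆ X`, `X ∖ R_D⁺` is closed, and
`w·(X ∖ R_D⁺) = X ∖ R_D⁺` for every `w ∈ W_D`. -/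
def IsClosedRel (n : ℕ) (D : Finset ℕ) (X : Set (ℕ × ℕ)) : Prop :=
  RD n D ⊆ X ∧ IsClosedSubset (X \ RD n D) ∧
    ∀ w ∈ WDperm D, permPair w '' (X \ RD n D) = X \ RD n D

/-- For `a ≤ b` with `[a,b) ⊆ D`, there is `w ∈ W_D` with `w a = b` fixing
everything outside `[a, b]`. -/
lemma cycle_lemma (D : Finset ℕ) (a b : ℕ) (hab : a ≤ b)
    (hm : ∀ m, a ≤ m → m < b → m ∈ D) :
    ∃ w ∈ WDperm D, w a = b ∧ ∀ x, x < a ∨ b < x → w x = x := by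
  induction b, hab using Nat.le_induction with
  | base => exact ⟨1, one_mem _, rfl, fun x _ => rfl⟩
  | succ b hab ih =>
    obtain ⟨w, hwm, hwa, hwfix⟩ := ih (fun m h1 h2 => hm m h1 (h2.trans (Nat.lt_succ_self b)))
    refine ⟨Equiv.swap b (b+1) * w, ?_, ?_, ?_⟩
    · exact mul_mem (Subgroup.subset_closure ⟨b, hm b hab (Nat.lt_succ_self b), rfl⟩) hwm
    · rw [Equiv.Perm.mul_apply, hwa, Equiv.swap_apply_left]
    · intro x hx
      have hx' : w x = x := hwfix x (by omega)
      rw [Equiv.Perm.mul_apply, hx', Equiv.swap_apply_of_ne_of_ne] <;> omega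

/-- Lemma `gln`, §2.3.  Every subset `X ⊆ R⁺` closed relative to `D`
is a closed subset of `R⁺`. -/
theorem statement8 (n : ℕ) (hn : 2 ≤ n) (D : Finset ℕ) (hD : D ⊆ Finset.Icc 1 (n - 1))
    (X : Set (ℕ × ℕ)) (hX : X ⊆ Rplus n) (h : IsClosedRel n D X) :
    IsClosedSubset X := by
  obtain ⟨hRD, hcl, hinv⟩ := h
  intro i j k hij hjk
  obtain ⟨hi1, hij', hjn⟩ := hX hij
  obtain ⟨hj1, hjk', hkn⟩ := hX hjk
  by_cases h1 : (i, j) ∈ RD n D <;> by_cases h2 : (j, k) ∈ RD n D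
  · -- both in RD
    apply hRD
    refine ⟨⟨hi1, by omega, hkn⟩, fun m hm1 hm2 => ?_⟩
    by_cases hmj : m < j
    · exact h1.2 m hm1 hmj
    · exact h2.2 m (by omega) hm2
  · -- (i,j) ∈ RD, (j,k) ∉ RD
    obtain ⟨w, hwm, hwa, hwfix⟩ :=
      cycle_lemma D i j (le_of_lt hij') (fun m hm1 hm2 => h1.2 m hm1 hm2)
    have hw' : w⁻¹ ∈ WDperm D := inv_mem hwm
    have hmem : permPair w⁻¹ (j, k) ∈ permPair w⁻¹ '' (X \ RD n D) :=
      Set.mem_image_of_mem _ ⟨hjk, h2⟩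
    rw [hinv _ hw'] at hmem
    have e1 : w⁻¹ j = i := by rw [← hwa]; exact Equiv.symm_apply_apply w i
    have e2 : w⁻¹ k = k := by
      have hk := hwfix k (Or.inr hjk')
      conv_lhs => rw [← hk]
      exact Equiv.symm_apply_apply w k
    rw [show permPair w⁻¹ (j, k) = (i, k) by simp [permPair, e1, e2]] at hmem
    exact hmem.1
  · -- (i,j) ∉ RD, (j,k) ∈ RD
    obtain ⟨w, hwm, hwa, hwfix⟩ :=
      cycle_lemma D j k (le_of_lt hjk') (fun m hm1 hm2 => h2.2 m hm1 hm2)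
    have hmem : permPair w (i, j) ∈ permPair w '' (X \ RD n D) :=
      Set.mem_image_of_mem _ ⟨hij, h1⟩
    rw [hinv _ hwm] at hmem
    have e1 : w i = i := hwfix i (Or.inl hij')
    rw [show permPair w (i, j) = (i, k) by simp [permPair, e1, hwa]] at hmem
    exact hmem.1
  · exact (hcl i j k ⟨hij, h1⟩ ⟨hjk, h2⟩).1

end BHHMS
end

section
/- Let n ≥ 2, D ⊆ {1,…,n−1}, and let X ⊆ R⁺ be closed relative to D. Then there exist an integer m ≥ 0 and roots α_1,…,α_m ∈ R⁺∖X such that R⁺ is the disjoint union of X and of the W_D-orbits W_D·α_1, …, W_D·α_m, and such that for every 1 ≤ i ≤ m the root α_i does not lie in the smallest subset of R⁺ closed relative to D containing X ∪ {α_1,…,α_{i−1}} (this smallest subset exists since an intersection of subsets closed relative to D is closed relative to D). (Paper: Lemma 'orderw' in §2.3.) -/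
/-!
Setup (§2.3 of the paper): `R⁺ = {(i,j) : 1 ≤ i < j ≤ n}` is the set of positive roots
`e_i − e_j` of `GL_n`; subsets closed relative to a subset `D ⊆ {1,…,n−1}` of simple
roots.  Permutations are taken in `Equiv.Perm ℕ`; `W_D` is generated by the
transpositions `(i, i+1)`, `i ∈ D`.
-/

namespace BHHMS

/-- The `W_D`-orbit of a root pair. -/
def WDorbit (D : Finset ℕ) (a : ℕ × ℕ) : Set (ℕ × ℕ) := {p | ∃ w ∈ WDperm D, permPair w a = p}

/-- The smallest subset of `R⁺` containing `S` which is closed relative to `D` (it exists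
since an intersection of subsets closed relative to `D` is closed relative to `D`). -/
def closureRel (n : ℕ) (D : Finset ℕ) (S : Set (ℕ × ℕ)) : Set (ℕ × ℕ) :=
  ⋂₀ {Y | S ⊆ Y ∧ Y ⊆ Rplus n ∧ IsClosedRel n D Y}

/-- Same block: every index between `i` and `j` lies in `D`. -/
def SB (D : Finset ℕ) (i j : ℕ) : Prop :=
  ∀ k, (i ≤ k ∧ k < j) ∨ (j ≤ k ∧ k < i) → k ∈ D

lemma sb_refl (D : Finset ℕ) (i : ℕ) : SB D i i := fun k hk => by omega
lemma sb_symm {D : Finset ℕ} {i j : ℕ} (h : SB D i j) : SB D j i := fun k hk => h k (by omega)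
lemma sb_trans {D : Finset ℕ} {i j l : ℕ} (h1 : SB D i j) (h2 : SB D j l) : SB D i l := by
  intro k hk
  rcases le_or_gt j k with hj | hj
  · rcases hk with hk | hk
    · exact h2 k (by omega)
    · exact h1 k (by omega)
  · rcases hk with hk | hk
    · exact h1 k (by omega)
    · exact h2 k (by omega)

lemma sb_le_iff {D : Finset ℕ} {i i' k : ℕ} (h : SB D i i') (hk : k ∉ D) : i ≤ k ↔ i' ≤ k := by
  constructor
  · intro hik; by_contra hc; exact hk (h k (by omega))
  · intro hik; by_contra hc; exact hk (h k (by omega))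

/-- Permutations preserving blocks form a subgroup. -/
def blockPerms (D : Finset ℕ) : Subgroup (Equiv.Perm ℕ) where
  carrier := {w | ∀ i, SB D i (w i)}
  one_mem' := fun i => sb_refl D i
  mul_mem' := by
    intro w v hw hv i
    exact sb_trans (hv i) (hw (v i))
  inv_mem' := by
    intro w hw i
    have := hw (w⁻¹ i)
    rw [show w (w⁻¹ i) = i by simp] at this
    exact sb_symm this

lemma wd_sb {D : Finset ℕ} {w : Equiv.Perm ℕ} (hw : w ∈ WDperm D) (i : ℕ) : SB D i (w i) := by
  have : WDperm D ≤ blockPerms D := by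
    rw [WDperm, Subgroup.closure_le]
    rintro g ⟨a, ha, rfl⟩ i
    rcases eq_or_ne i a with rfl | h1
    · rw [Equiv.swap_apply_left]; intro k hk; have : k = i := by omega
      subst this; exact ha
    rcases eq_or_ne i (a+1) with rfl | h2
    · rw [Equiv.swap_apply_right]; intro k hk; have : k = a := by omega
      subst this; exact ha
    · rw [Equiv.swap_apply_of_ne_of_ne h1 h2]; exact sb_refl D i
  exact this hw i

lemma swap_add_mem {D : Finset ℕ} (i d : ℕ) (h : ∀ k, i ≤ k → k < i + d → k ∈ D) :
    Equiv.swap i (i + d) ∈ WDperm D := by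
  induction d with
  | zero => simp only [Nat.add_zero, Equiv.swap_self]; exact (WDperm D).one_mem
  | succ d ih =>
    have hd : i + d ∈ D := h (i + d) (by omega) (by omega)
    have hgen : Equiv.swap (i + d) (i + d + 1) ∈ WDperm D :=
      Subgroup.subset_closure ⟨i + d, hd, rfl⟩
    have hsw : Equiv.swap i (i + d) ∈ WDperm D := ih (fun k h1 h2 => h k h1 (by omega))
    rcases Nat.eq_zero_or_pos d with rfl | hdpos
    · exact hgen
    have key : Equiv.swap (i + d) (i + d + 1) * Equiv.swap i (i + d) *
        Equiv.swap (i + d) (i + d + 1) = Equiv.swap (i + d + 1) i :=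
      Equiv.swap_mul_swap_mul_swap (by omega) (by omega)
    have : Equiv.swap i (i + (d + 1)) = Equiv.swap (i + d + 1) i := by
      rw [Equiv.swap_comm]; ring_nf
    rw [this, ← key]
    exact Subgroup.mul_mem _ (Subgroup.mul_mem _ hgen hsw) hgen

lemma swap_mem_of_sb {D : Finset ℕ} {i j : ℕ} (h : SB D i j) : Equiv.swap i j ∈ WDperm D := by
  rcases le_total i j with hij | hij
  · obtain ⟨d, rfl⟩ : ∃ d, j = i + d := ⟨j - i, by omega⟩
    exact swap_add_mem i d (fun k h1 h2 => h k (by omega))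
  · obtain ⟨d, rfl⟩ : ∃ d, i = j + d := ⟨i - j, by omega⟩
    rw [Equiv.swap_comm]
    exact swap_add_mem j d (fun k h1 h2 => h k (by omega))


/-- Number of "non-D" walls inside the root interval: a `W_D`-orbit invariant. -/
def cnt (D : Finset ℕ) (p : ℕ × ℕ) : ℕ := ((Finset.Ico p.1 p.2).filter (· ∉ D)).card

lemma cnt_filter_eq {D : Finset ℕ} {p q : ℕ × ℕ} (h1 : SB D p.1 q.1) (h2 : SB D p.2 q.2) :
    (Finset.Ico p.1 p.2).filter (· ∉ D) = (Finset.Ico q.1 q.2).filter (· ∉ D) := by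
  ext k
  simp only [Finset.mem_filter, Finset.mem_Ico]
  constructor
  · rintro ⟨⟨ha, hb⟩, hk⟩
    refine ⟨⟨(sb_le_iff h1 hk).1 ha, ?_⟩, hk⟩
    by_contra hc
    exact (by omega : ¬ p.2 ≤ k) ((sb_le_iff h2 hk).2 (by omega))
  · rintro ⟨⟨ha, hb⟩, hk⟩
    refine ⟨⟨(sb_le_iff h1 hk).2 ha, ?_⟩, hk⟩
    by_contra hc
    exact (by omega : ¬ q.2 ≤ k) ((sb_le_iff h2 hk).1 (by omega))

lemma cnt_eq {D : Finset ℕ} {p q : ℕ × ℕ} (h1 : SB D p.1 q.1) (h2 : SB D p.2 q.2) :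
    cnt D p = cnt D q := by
  unfold cnt; rw [cnt_filter_eq h1 h2]

lemma cnt_pos {D : Finset ℕ} {p : ℕ × ℕ} {k : ℕ} (hk : k ∉ D) (h1 : p.1 ≤ k) (h2 : k < p.2) :
    1 ≤ cnt D p := by
  have : k ∈ (Finset.Ico p.1 p.2).filter (· ∉ D) := by
    simp only [Finset.mem_filter, Finset.mem_Ico]; exact ⟨⟨h1, h2⟩, hk⟩
  exact Finset.card_pos.2 ⟨k, this⟩

lemma cnt_add {D : Finset ℕ} {i j l : ℕ} (h1 : i ≤ j) (h2 : j ≤ l) :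
    cnt D (i, l) = cnt D (i, j) + cnt D (j, l) := by
  unfold cnt
  simp only
  rw [← Finset.Ico_union_Ico_eq_Ico h1 h2, Finset.filter_union,
    Finset.card_union_of_disjoint]
  exact Finset.disjoint_filter_filter (Finset.Ico_disjoint_Ico_consecutive i j l)

/-- Not being in `RD` gives a non-`D` witness in the interval. -/
lemma not_rd_iff {n : ℕ} {D : Finset ℕ} {p : ℕ × ℕ} (hp : p ∈ Rplus n) :
    p ∉ RD n D ↔ ∃ k, k ∉ D ∧ p.1 ≤ k ∧ k < p.2 := by
  simp only [RD, Set.mem_setOf_eq, hp, true_and, Set.sep_setOf]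
  push_neg
  constructor
  · rintro ⟨k, h1, h2, h3⟩; exact ⟨k, h3, h1, h2⟩
  · rintro ⟨k, h3, h1, h2⟩; exact ⟨k, h1, h2, h3⟩

/-- Targets of the `SB` relation from a genuine non-Levi root are again such roots. -/
lemma sb_target {n : ℕ} {D : Finset ℕ} (hD : D ⊆ Finset.Icc 1 (n - 1)) (hn : 2 ≤ n)
    {p q : ℕ × ℕ} (hp : p ∈ Rplus n) {k : ℕ} (hk : k ∉ D) (hk1 : p.1 ≤ k) (hk2 : k < p.2)
    (h1 : SB D p.1 q.1) (h2 : SB D p.2 q.2) :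
    q ∈ Rplus n ∧ q.1 ≤ k ∧ k < q.2 := by
  obtain ⟨ha1, ha2, ha3⟩ := hp
  have hq1 : q.1 ≤ k := (sb_le_iff h1 hk).1 hk1
  have hq2 : k < q.2 := by
    by_contra hc
    exact (by omega : ¬ p.2 ≤ k) ((sb_le_iff h2 hk).2 (by omega))
  refine ⟨⟨?_, by omega, ?_⟩, hq1, hq2⟩
  · rcases Nat.lt_or_ge q.1 p.1 with hlt | hge
    · have : q.1 ∈ D := h1 q.1 (by omega)
      have := hD this
      simp only [Finset.mem_Icc] at this
      omega
    · omega
  · rcases Nat.lt_or_ge p.2 q.2 with hlt | hge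
    · have : q.2 - 1 ∈ D := h2 (q.2 - 1) (by omega)
      have := hD this
      simp only [Finset.mem_Icc] at this
      omega
    · omega

/-- Description of the `W_D`-orbit of a non-Levi positive root. -/
lemma orbit_eq {D : Finset ℕ} {p : ℕ × ℕ} {k : ℕ} (hk : k ∉ D) (hk1 : p.1 ≤ k) (hk2 : k < p.2) :
    WDorbit D p = {q | SB D p.1 q.1 ∧ SB D p.2 q.2} := by
  ext q
  constructor
  · rintro ⟨w, hw, rfl⟩
    exact ⟨wd_sb hw p.1, wd_sb hw p.2⟩
  · rintro ⟨h1, h2⟩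
    have hq1 : q.1 ≤ k := (sb_le_iff h1 hk).1 hk1
    have hq2 : k < q.2 := by
      by_contra hc
      exact (by omega : ¬ p.2 ≤ k) ((sb_le_iff h2 hk).2 (by omega))
    refine ⟨Equiv.swap p.1 q.1 * Equiv.swap p.2 q.2,
      Subgroup.mul_mem _ (swap_mem_of_sb h1) (swap_mem_of_sb h2), ?_⟩
    have e1 : (Equiv.swap p.1 q.1 * Equiv.swap p.2 q.2) p.1 = q.1 := by
      simp only [Equiv.Perm.mul_apply]
      rw [show (Equiv.swap p.2 q.2) p.1 = p.1 from
        Equiv.swap_apply_of_ne_of_ne (by omega) (by omega), Equiv.swap_apply_left]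
    have e2 : (Equiv.swap p.1 q.1 * Equiv.swap p.2 q.2) p.2 = q.2 := by
      simp only [Equiv.Perm.mul_apply]
      rw [Equiv.swap_apply_left]
      exact Equiv.swap_apply_of_ne_of_ne (by omega) (by omega)
    simp [permPair, e1, e2]

lemma permPair_one (p : ℕ × ℕ) : permPair 1 p = p := rfl

lemma permPair_mul (w v : Equiv.Perm ℕ) (p : ℕ × ℕ) :
    permPair (w * v) p = permPair w (permPair v p) := rfl

lemma permPair_inv_cancel (w : Equiv.Perm ℕ) (p : ℕ × ℕ) :
    permPair w⁻¹ (permPair w p) = p := by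
  simp [permPair]

lemma orbit_self (D : Finset ℕ) (p : ℕ × ℕ) : p ∈ WDorbit D p :=
  ⟨1, (WDperm D).one_mem, permPair_one p⟩

lemma orbit_stable {D : Finset ℕ} {p z : ℕ × ℕ} {w : Equiv.Perm ℕ} (hw : w ∈ WDperm D)
    (hz : z ∈ WDorbit D p) : permPair w z ∈ WDorbit D p := by
  obtain ⟨v, hv, rfl⟩ := hz
  exact ⟨w * v, Subgroup.mul_mem _ hw hv, (permPair_mul w v p)⟩

lemma stable_of_pointwise {D : Finset ℕ} {Z : Set (ℕ × ℕ)}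
    (hZ : ∀ w ∈ WDperm D, ∀ q ∈ Z, permPair w q ∈ Z) :
    ∀ w ∈ WDperm D, permPair w '' Z = Z := by
  intro w hw
  apply subset_antisymm
  · rintro _ ⟨q, hq, rfl⟩; exact hZ w hw q hq
  · intro q hq
    exact ⟨permPair w⁻¹ q, hZ _ (Subgroup.inv_mem _ hw) q hq, by simp [permPair]⟩

/-- The minimal element of the `D`-block of `i`. -/
noncomputable def bmin (D : Finset ℕ) (i : ℕ) : ℕ := sInf {j | SB D j i}

lemma bmin_sb (D : Finset ℕ) (i : ℕ) : SB D (bmin D i) i :=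
  Nat.sInf_mem (s := {j | SB D j i}) ⟨i, sb_refl D i⟩

lemma bmin_eq_of_sb {D : Finset ℕ} {i j : ℕ} (h : SB D i j) : bmin D i = bmin D j := by
  unfold bmin
  congr 1
  ext l
  exact ⟨fun hl => sb_trans hl h, fun hl => sb_trans hl (sb_symm h)⟩

/-- The canonical representative of the orbit of a pair. -/
noncomputable def rep (D : Finset ℕ) (p : ℕ × ℕ) : ℕ × ℕ := (bmin D p.1, bmin D p.2)

lemma rep_idem (D : Finset ℕ) (p : ℕ × ℕ) : rep D (rep D p) = rep D p := by
  unfold rep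
  simp only [Prod.mk.injEq]
  exact ⟨bmin_eq_of_sb (bmin_sb D p.1), bmin_eq_of_sb (bmin_sb D p.2)⟩

/-- Elements of the orbit of a non-Levi root `p`: all data transfers. -/
lemma orbit_elem {n : ℕ} {D : Finset ℕ} (hD : D ⊆ Finset.Icc 1 (n - 1)) (hn : 2 ≤ n)
    {p z : ℕ × ℕ} (hp : p ∈ Rplus n) {k : ℕ} (hk : k ∉ D) (hk1 : p.1 ≤ k) (hk2 : k < p.2)
    (hz : z ∈ WDorbit D p) :
    z ∈ Rplus n ∧ z.1 ≤ k ∧ k < z.2 ∧ cnt D z = cnt D p ∧ rep D z = rep D p := by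
  rw [orbit_eq hk hk1 hk2] at hz
  obtain ⟨h1, h2⟩ := hz
  obtain ⟨hR, hw1, hw2⟩ := sb_target hD hn hp hk hk1 hk2 h1 h2
  refine ⟨hR, hw1, hw2, (cnt_eq h1 h2).symm, ?_⟩
  unfold rep
  simp only [Prod.mk.injEq]
  exact ⟨(bmin_eq_of_sb h1).symm, (bmin_eq_of_sb h2).symm⟩


/-- Lemma `orderw`, §2.3.  For `X ⊆ R⁺` closed relative to `D` there are
roots `α_1, …, α_m ∈ R⁺ ∖ X` such that `R⁺` is the disjoint union of `X` and of the
`W_D`-orbits of the `α_i`, and such that each `α_i` does not lie in the smallest subset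
closed relative to `D` containing `X ∪ {α_1,…,α_{i−1}}`. -/
theorem statement9 (n : ℕ) (hn : 2 ≤ n) (D : Finset ℕ) (hD : D ⊆ Finset.Icc 1 (n - 1))
    (X : Set (ℕ × ℕ)) (hX : X ⊆ Rplus n) (h : IsClosedRel n D X) :
    ∃ (m : ℕ) (a : Fin m → ℕ × ℕ),
      (∀ i, a i ∈ Rplus n \ X) ∧
      (Rplus n = X ∪ ⋃ i, WDorbit D (a i)) ∧
      (∀ i, Disjoint X (WDorbit D (a i))) ∧
      (∀ i j : Fin m, i ≠ j → Disjoint (WDorbit D (a i)) (WDorbit D (a j))) ∧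
      (∀ i : Fin m, a i ∉ closureRel n D (X ∪ {p | ∃ j : Fin m, j < i ∧ a j = p})) := by
  classical
  obtain ⟨hRDX, hXcl, hXst⟩ := h
  set Q : Set (ℕ × ℕ) := Rplus n \ X with hQdef
  -- every element of Q has a non-D witness
  have hQwit : ∀ q ∈ Q, ∃ k, k ∉ D ∧ q.1 ≤ k ∧ k < q.2 := by
    intro q hq
    exact (not_rd_iff hq.1).1 (fun hrd => hq.2 (hRDX hrd))
  -- orbits of elements of Q stay in Q
  have hQstable : ∀ q ∈ Q, WDorbit D q ⊆ Q := by
    intro q hq z hz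
    obtain ⟨k, hk, hk1, hk2⟩ := hQwit q hq
    obtain ⟨hzR, hz1, hz2, -, -⟩ := orbit_elem hD hn hq.1 hk hk1 hk2 hz
    refine ⟨hzR, fun hzX => ?_⟩
    obtain ⟨w, hw, rfl⟩ := hz
    have hzRD : permPair w q ∉ RD n D := by
      rw [not_rd_iff hzR]; exact ⟨k, hk, hz1, hz2⟩
    have : q ∈ X \ RD n D := by
      rw [← hXst w⁻¹ (Subgroup.inv_mem _ hw)]
      exact ⟨permPair w q, ⟨hzX, hzRD⟩, permPair_inv_cancel w q⟩
    exact hq.2 this.1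
  -- the finset of canonical representatives
  set F : Finset (ℕ × ℕ) :=
    ((Finset.Icc 1 n) ×ˢ (Finset.Icc 1 n)).filter (fun p => p ∈ Q ∧ rep D p = p) with hFdef
  set le : ℕ × ℕ → ℕ × ℕ → Bool := fun p q => decide (cnt D q ≤ cnt D p) with hledef
  set l : List (ℕ × ℕ) := F.toList.mergeSort le with hldef
  have hperm := List.mergeSort_perm F.toList le
  have hmeml : ∀ p, p ∈ l ↔ (p ∈ Q ∧ rep D p = p) := by
    intro p
    rw [hldef, hperm.mem_iff, Finset.mem_toList, hFdef, Finset.mem_filter]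
    constructor
    · rintro ⟨-, h2⟩; exact h2
    · rintro ⟨h1, h2⟩
      refine ⟨?_, h1, h2⟩
      obtain ⟨hp1, hp2, hp3⟩ := h1.1
      simp only [Finset.mem_product, Finset.mem_Icc]
      exact ⟨⟨hp1, by omega⟩, by omega, hp3⟩
  have hnodup : l.Nodup := hperm.nodup_iff.2 F.nodup_toList
  have hsorted : ∀ i j : Fin l.length, i < j → cnt D (l.get j) ≤ cnt D (l.get i) := by
    have hs := List.pairwise_mergeSort (le := le)
      (fun a b c hab hbc => by
        simp only [hledef, decide_eq_true_eq] at *; omega)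
      (fun a b => by simp only [hledef, Bool.or_eq_true, decide_eq_true_eq]; omega)
      F.toList
    rw [← hldef] at hs
    rw [List.pairwise_iff_get] at hs
    intro i j hij
    have := hs i j hij
    simpa only [hledef, decide_eq_true_eq] using this
  refine ⟨l.length, l.get, ?_, ?_, ?_, ?_, ?_⟩
  · intro i
    exact ((hmeml (l.get i)).1 (l.get_mem i)).1
  · -- covering
    apply subset_antisymm
    · intro q hqR
      by_cases hqX : q ∈ X
      · exact Set.mem_union_left _ hqX
      have hq : q ∈ Q := ⟨hqR, hqX⟩
      obtain ⟨k, hk, hk1, hk2⟩ := hQwit q hq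
      have hrq : rep D q ∈ WDorbit D q := by
        rw [orbit_eq hk hk1 hk2]
        exact ⟨sb_symm (bmin_sb D q.1), sb_symm (bmin_sb D q.2)⟩
      have hrQ : rep D q ∈ Q := hQstable q hq hrq
      have hrl : rep D q ∈ l := (hmeml _).2 ⟨hrQ, rep_idem D q⟩
      obtain ⟨i, hi⟩ := List.get_of_mem hrl
      refine Set.mem_union_right _ (Set.mem_iUnion.2 ⟨i, ?_⟩)
      -- q is in the orbit of rep D q = l.get i
      obtain ⟨-, hr1, hr2, -, -⟩ := orbit_elem hD hn hq.1 hk hk1 hk2 hrq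
      rw [hi, orbit_eq hk hr1 hr2]
      exact ⟨bmin_sb D q.1, bmin_sb D q.2⟩
    · rintro q (hq | hq)
      · exact hX hq
      · obtain ⟨i, hi⟩ := Set.mem_iUnion.1 hq
        exact (hQstable _ ((hmeml _).1 (l.get_mem i)).1 hi).1
  · -- disjoint from X
    intro i
    rw [Set.disjoint_right]
    intro z hz
    exact (hQstable _ ((hmeml _).1 (l.get_mem i)).1 hz).2
  · -- pairwise disjoint
    intro i j hij
    rw [Set.disjoint_left]
    intro z hzi hzj
    apply hij
    obtain ⟨hiQ, hirep⟩ := (hmeml _).1 (l.get_mem i)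
    obtain ⟨hjQ, hjrep⟩ := (hmeml _).1 (l.get_mem j)
    obtain ⟨ki, hki, hki1, hki2⟩ := hQwit _ hiQ
    obtain ⟨kj, hkj, hkj1, hkj2⟩ := hQwit _ hjQ
    obtain ⟨-, -, -, -, hrzi⟩ := orbit_elem hD hn hiQ.1 hki hki1 hki2 hzi
    obtain ⟨-, -, -, -, hrzj⟩ := orbit_elem hD hn hjQ.1 hkj hkj1 hkj2 hzj
    have : l.get i = l.get j := by rw [← hirep, ← hjrep, ← hrzi, ← hrzj]
    exact (List.Nodup.get_inj_iff hnodup).1 this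
  · -- the closure condition
    intro i hmem
    obtain ⟨hiQ, hirep⟩ := (hmeml _).1 (l.get_mem i)
    obtain ⟨ki, hki, hki1, hki2⟩ := hQwit _ hiQ
    set t := cnt D (l.get i) with htdef
    set O := WDorbit D (l.get i) with hOdef
    set A : Set (ℕ × ℕ) :=
      {q | q ∈ Rplus n ∧ (∃ k, k ∉ D ∧ q.1 ≤ k ∧ k < q.2) ∧ t ≤ cnt D q} with hAdef
    set Y : Set (ℕ × ℕ) := (X ∪ A) \ O with hYdef
    -- facts about O
    have hOQ : O ⊆ Q := hQstable _ hiQ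
    have hOcnt : ∀ z ∈ O, cnt D z = t :=
      fun z hz => (orbit_elem hD hn hiQ.1 hki hki1 hki2 hz).2.2.2.1
    -- A avoids RD
    have hARD : ∀ z ∈ A, z ∉ RD n D := by
      rintro z ⟨hzR, ⟨k, hk, h1, h2⟩, -⟩
      rw [not_rd_iff hzR]
      exact ⟨k, hk, h1, h2⟩
    -- Q avoids RD
    have hQRD : ∀ z ∈ Q, z ∉ RD n D := fun z hz hrd => hz.2 (hRDX hrd)
    -- Y \ RD description
    have hYRD : Y \ RD n D = ((X \ RD n D) ∪ A) \ O := by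
      ext z
      simp only [hYdef, Set.mem_diff, Set.mem_union]
      constructor
      · rintro ⟨⟨hz1, hz2⟩, hz3⟩
        rcases hz1 with hz1 | hz1
        · exact ⟨Or.inl ⟨hz1, hz3⟩, hz2⟩
        · exact ⟨Or.inr hz1, hz2⟩
      · rintro ⟨hz1, hz2⟩
        rcases hz1 with ⟨hz1, hz3⟩ | hz1
        · exact ⟨⟨Or.inl hz1, hz2⟩, hz3⟩
        · exact ⟨⟨Or.inr hz1, hz2⟩, hARD z hz1⟩
    -- basic facts for elements of (X \ RD) ∪ A
    have hbase : ∀ z, z ∈ (X \ RD n D) ∪ A →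
        z ∈ Rplus n ∧ (∃ k, k ∉ D ∧ z.1 ≤ k ∧ k < z.2) ∧ 1 ≤ cnt D z := by
      rintro z (⟨hz1, hz2⟩ | ⟨hz1, ⟨k, hk⟩, -⟩)
      · have hzR := hX hz1
        obtain ⟨k, hk, h1, h2⟩ := (not_rd_iff hzR).1 hz2
        exact ⟨hzR, ⟨k, hk, h1, h2⟩, cnt_pos hk h1 h2⟩
      · exact ⟨hz1, ⟨k, hk⟩, cnt_pos hk.1 hk.2.1 hk.2.2⟩
    have ht1 : 1 ≤ t := cnt_pos hki hki1 hki2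
    -- Y is closed relative to D
    have hYclosed : IsClosedRel n D Y := by
      refine ⟨?_, ?_, ?_⟩
      · -- RD ⊆ Y
        intro z hz
        refine ⟨Or.inl (hRDX hz), fun hzO => (hQRD z (hOQ hzO)) hz⟩
      · -- closed
        intro a b c hab hbc
        rw [hYRD] at *
        obtain ⟨hab1, hab2⟩ := hab
        obtain ⟨hbc1, hbc2⟩ := hbc
        obtain ⟨habR, ⟨k1, hk1w⟩, habc⟩ := hbase _ hab1
        obtain ⟨hbcR, -, hbcc⟩ := hbase _ hbc1
        have hacR : (a, c) ∈ Rplus n := ⟨habR.1, by exact lt_trans habR.2.1 hbcR.2.1, hbcR.2.2⟩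
        have hle1 : a ≤ b := le_of_lt habR.2.1
        have hle2 : b ≤ c := le_of_lt hbcR.2.1
        have hcnt : cnt D (a, c) = cnt D (a, b) + cnt D (b, c) := cnt_add hle1 hle2
        have hacw : ∃ k, k ∉ D ∧ (a, c).1 ≤ k ∧ k < (a, c).2 := by
          refine ⟨k1, hk1w.1, hk1w.2.1, ?_⟩
          simp only at *
          omega
        rcases hab1 with habX | habA
        · rcases hbc1 with hbcX | hbcA
          · -- both in X \ RD
            have hac : (a, c) ∈ X \ RD n D := hXcl a b c habX hbcX
            refine ⟨Or.inl hac, fun hacO => (hOQ hacO).2 hac.1⟩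
          · -- second in A
            have hc : t + 1 ≤ cnt D (a, c) := by
              have := hbcA.2.2
              omega
            refine ⟨Or.inr ⟨hacR, hacw, by omega⟩, fun hacO => ?_⟩
            have := hOcnt _ hacO
            omega
        · -- first in A
          have hc : t + 1 ≤ cnt D (a, c) := by
            have := habA.2.2
            omega
          refine ⟨Or.inr ⟨hacR, hacw, by omega⟩, fun hacO => ?_⟩
          have := hOcnt _ hacO
          omega
      · -- stability
        rw [hYRD]
        apply stable_of_pointwise
        intro w hw z hz
        obtain ⟨hz1, hz2⟩ := hz
        have hz2' : permPair w z ∉ O := by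
          intro hc
          apply hz2
          have := orbit_stable (Subgroup.inv_mem _ hw) hc
          rwa [permPair_inv_cancel] at this
        refine ⟨?_, hz2'⟩
        rcases hz1 with hzX | hzA
        · left
          rw [← hXst w hw]
          exact ⟨z, hzX, rfl⟩
        · right
          obtain ⟨hzR, ⟨k, hk, hk1', hk2'⟩, hzc⟩ := hzA
          have horb : permPair w z ∈ WDorbit D z := ⟨w, hw, rfl⟩
          obtain ⟨hR, h1, h2, hc, -⟩ := orbit_elem hD hn hzR hk hk1' hk2' horb
          exact ⟨hR, ⟨k, hk, h1, h2⟩, by omega⟩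
    -- X ∪ prev ⊆ Y
    have hsub : (X ∪ {p | ∃ j : Fin l.length, j < i ∧ l.get j = p}) ⊆ Y := by
      rintro z (hzX | ⟨j, hji, rfl⟩)
      · exact ⟨Or.inl hzX, fun hzO => (hOQ hzO).2 hzX⟩
      · obtain ⟨hjQ, hjrep⟩ := (hmeml _).1 (l.get_mem j)
        obtain ⟨kj, hkj, hkj1, hkj2⟩ := hQwit _ hjQ
        have hcj : t ≤ cnt D (l.get j) := hsorted j i hji
        refine ⟨Or.inr ⟨hjQ.1, ⟨kj, hkj, hkj1, hkj2⟩, hcj⟩, fun hjO => ?_⟩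
        obtain ⟨-, -, -, -, hrj⟩ := orbit_elem hD hn hiQ.1 hki hki1 hki2 hjO
        have : l.get j = l.get i := by rw [← hjrep, ← hirep, hrj]
        have := (List.Nodup.get_inj_iff hnodup).1 this
        omega
    have hai : l.get i ∉ Y := fun hc => hc.2 (orbit_self D (l.get i))
    exact hai (hmem Y ⟨hsub, fun z hz => (match hz.1 with
      | Or.inl hzX => hX hzX
      | Or.inr hzA => hzA.1), hYclosed⟩)


end BHHMS
end

section
/- Let M be an R-module and let ψ : M → M be an additive map satisfying ψ(φ(a)·x) = a·ψ(x) for all a ∈ R and x ∈ M (equivalently: ψ is 𝔽-linear and ψ(Y_{i−1}^p·x) = Y_i·ψ(x) for all i, indices modulo f). Then for every integer n ≥ 0 one has ψ(m^{pf−(f−1)+pn}·M) ⊆ m^{n+1}·M. Consequently, for every n ≥ pf−(f−1) one has ψ(m^n·M) ⊆ m^{⌈n/p⌉−f}·M. (Paper: Lemma 'lem:psicontinueN0' in §3.1.2.) -/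
/-!
Setup (Lemma `lem:psicontinueN0`, §3.1.2 of the paper): `R = 𝔽[[Y_0,…,Y_{f−1}]]` is the
formal power series ring in `f` variables (here `MvPowerSeries (Fin f) 𝔽`), `m` is its
maximal ideal `(Y_0,…,Y_{f−1})`, and `φ` is the continuous `𝔽`-algebra endomorphism with
`φ (Y i) = Y (i−1) ^ p` (indices modulo `f`; here we quantify over any ring homomorphism
with this property).  The hypothesis `f ≥ 1` is expressed as `[NeZero f]`, and
`⌈n/p⌉ = (n + p − 1)/p`.
-/

namespace BHHMS

/-- The maximal ideal `m = (Y_0, …, Y_{f−1})` of `𝔽[[Y_0,…,Y_{f−1}]]`. -/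
noncomputable def mIdeal (𝔽 : Type*) [Field 𝔽] (f : ℕ) : Ideal (MvPowerSeries (Fin f) 𝔽) :=
  Ideal.span (Set.range (MvPowerSeries.X : Fin f → MvPowerSeries (Fin f) 𝔽))


/-- Products of elements of powers of an ideal land in the power of the sum. -/
lemma prod_mem_pow_sum {R : Type*} [CommRing R] {ι : Type*} (I : Ideal R)
    (s : Finset ι) (g : ι → R) (e : ι → ℕ) (h : ∀ i ∈ s, g i ∈ I ^ e i) :
    ∏ i ∈ s, g i ∈ I ^ (∑ i ∈ s, e i) := by
  classical
  induction s using Finset.induction with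
  | empty => simp [Ideal.one_eq_top]
  | @insert a s hnot ih =>
    rw [Finset.prod_insert hnot, Finset.sum_insert hnot, pow_add]
    exact Ideal.mul_mem_mul (h a (Finset.mem_insert_self a s))
      (ih fun i hi => h i (Finset.mem_insert_of_mem hi))

/-- Key ideal-theoretic lemma: `m^(pf-(f-1)+pn) ⊆ (φ(m^(n+1)))`. -/
lemma key (𝔽 : Type*) [Field 𝔽] (p f : ℕ) (hp : p.Prime) [NeZero f]
    (φ : MvPowerSeries (Fin f) 𝔽 →+* MvPowerSeries (Fin f) 𝔽)
    (hφ : ∀ i : Fin f, φ (MvPowerSeries.X i) = MvPowerSeries.X (i - 1) ^ p) (n : ℕ) :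
    mIdeal 𝔽 f ^ (p * f - (f - 1) + p * n) ≤
      Ideal.span (⇑φ '' ((mIdeal 𝔽 f ^ (n + 1) : Ideal _) : Set _)) := by
  classical
  set R := MvPowerSeries (Fin f) 𝔽
  set N := p * f - (f - 1) + p * n with hN
  rw [mIdeal, Ideal.span, Submodule.span_pow, Submodule.span_le]
  intro r hr
  rw [Set.mem_pow] at hr
  obtain ⟨g, hg⟩ := hr
  choose c hc using fun i => (g i).2
  -- r = ∏ j, X (c j)
  have hr' : r = ∏ j : Fin N, (MvPowerSeries.X (c j) : R) := by
    rw [← hg, List.prod_ofFn]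
    exact Finset.prod_congr rfl fun j _ => (hc j).symm
  set a : Fin f → ℕ := fun i => (Finset.univ.filter (fun j : Fin N => c j = i)).card with ha
  have hsum : ∑ i, a i = N := by
    rw [ha]
    simpa using (Finset.card_eq_sum_card_fiberwise
      (f := c) (s := Finset.univ) (t := Finset.univ) (fun j _ => Finset.mem_univ _)).symm
  have hr2 : r = ∏ i : Fin f, (MvPowerSeries.X i : R) ^ a i := by
    rw [hr', ← Finset.prod_fiberwise Finset.univ c (fun j => (MvPowerSeries.X (c j) : R))]
    refine Finset.prod_congr rfl fun i _ => ?_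
    rw [ha]
    simp only
    rw [Finset.prod_congr rfl (fun j hj => by
        rw [(Finset.mem_filter.1 hj).2]), Finset.prod_const]
  set b : Fin f → ℕ := fun i => a i / p
  have hb1 : ∀ i, p * b i ≤ a i := fun i => by
    rw [mul_comm]; exact Nat.div_mul_le_self (a i) p
  have hble : ∀ i, a i ≤ p * b i + (p - 1) := by
    intro i
    have h1 : p * b i + a i % p = a i := Nat.div_add_mod (a i) p
    have h2 : a i % p ≤ p - 1 := Nat.le_sub_one_of_lt (Nat.mod_lt _ hp.pos)
    calc a i = p * b i + a i % p := h1.symm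
      _ ≤ p * b i + (p - 1) := Nat.add_le_add_left h2 _
  have hbsum : n + 1 ≤ ∑ i, b i := by
    have h1 : N ≤ ∑ i : Fin f, (p * b i + (p - 1)) := hsum ▸ Finset.sum_le_sum fun i _ => hble i
    rw [Finset.sum_add_distrib, ← Finset.mul_sum, Finset.sum_const] at h1
    simp only [Finset.card_univ, Fintype.card_fin, smul_eq_mul] at h1
    have hf1 : 1 ≤ f := NeZero.one_le
    have hp2 : 2 ≤ p := hp.two_le
    -- N = p*f - (f-1) + p*n, so p*(∑ b) ≥ p*n + 1
    have e : f * (p - 1) + f = f * p := by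
      rw [← Nat.mul_succ, Nat.succ_eq_add_one, Nat.sub_add_cancel hp.one_le]
    have comm : f * p = p * f := mul_comm f p
    have hfp : f ≤ p * f := Nat.le_mul_of_pos_left f hp.pos
    have h2 : p * n + 1 ≤ p * (∑ i, b i) := by omega
    by_contra hcon
    push_neg at hcon
    have : p * (∑ i, b i) ≤ p * n := Nat.mul_le_mul_left p (by omega)
    omega
  -- the φ-preimage monomial
  set cmon : R := ∏ i : Fin f, (MvPowerSeries.X (i + 1) : R) ^ b i with hcmon
  have hcmem : cmon ∈ mIdeal 𝔽 f ^ (n + 1) := by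
    have : cmon ∈ mIdeal 𝔽 f ^ (∑ i, b i) := by
      refine prod_mem_pow_sum _ _ _ _ fun i _ => ?_
      exact Ideal.pow_mem_pow (Ideal.subset_span (Set.mem_range_self _)) _
    exact Ideal.pow_le_pow_right hbsum this
  have hφc : φ cmon = ∏ i : Fin f, (MvPowerSeries.X i : R) ^ (p * b i) := by
    rw [hcmon, map_prod]
    refine Finset.prod_congr rfl fun i _ => ?_
    rw [map_pow, hφ, add_sub_cancel_right, ← pow_mul, mul_comm]
  have hdecomp : r = φ cmon * ∏ i : Fin f, (MvPowerSeries.X i : R) ^ (a i - p * b i) := by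
    rw [hr2, hφc, ← Finset.prod_mul_distrib]
    refine Finset.prod_congr rfl fun i _ => ?_
    rw [← pow_add, Nat.add_sub_cancel' (hb1 i)]
  rw [hdecomp]
  exact Ideal.mul_mem_right _ _ (Ideal.subset_span ⟨cmon, hcmem, rfl⟩)

/-- Lemma `lem:psicontinueN0`, §3.1.2.  If `ψ : M → M` is additive and
satisfies `ψ (φ a • x) = a • ψ x`, then `ψ (m^{pf−(f−1)+pn}·M) ⊆ m^{n+1}·M` for all
`n ≥ 0`, and consequently `ψ (m^n·M) ⊆ m^{⌈n/p⌉−f}·M` for all `n ≥ pf−(f−1)`. -/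
theorem statement10 (𝔽 : Type*) [Field 𝔽] (p f : ℕ) (hp : p.Prime) [NeZero f]
    (φ : MvPowerSeries (Fin f) 𝔽 →+* MvPowerSeries (Fin f) 𝔽)
    (hφ : ∀ i : Fin f, φ (MvPowerSeries.X i) = MvPowerSeries.X (i - 1) ^ p)
    (M : Type*) [AddCommGroup M] [Module (MvPowerSeries (Fin f) 𝔽) M] (ψ : M →+ M)
    (hψ : ∀ (a : MvPowerSeries (Fin f) 𝔽) (x : M), ψ (φ a • x) = a • ψ x) :
    (∀ (n : ℕ) (x : M),
        x ∈ (mIdeal 𝔽 f ^ (p * f - (f - 1) + p * n)) •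
              (⊤ : Submodule (MvPowerSeries (Fin f) 𝔽) M) →
        ψ x ∈ (mIdeal 𝔽 f ^ (n + 1)) • (⊤ : Submodule (MvPowerSeries (Fin f) 𝔽) M)) ∧
    (∀ n : ℕ, p * f - (f - 1) ≤ n → ∀ x : M,
        x ∈ (mIdeal 𝔽 f ^ n) • (⊤ : Submodule (MvPowerSeries (Fin f) 𝔽) M) →
        ψ x ∈ (mIdeal 𝔽 f ^ ((n + p - 1) / p - f)) •
              (⊤ : Submodule (MvPowerSeries (Fin f) 𝔽) M)) := by
  have part1 : ∀ (n : ℕ) (x : M),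
      x ∈ (mIdeal 𝔽 f ^ (p * f - (f - 1) + p * n)) •
            (⊤ : Submodule (MvPowerSeries (Fin f) 𝔽) M) →
      ψ x ∈ (mIdeal 𝔽 f ^ (n + 1)) • (⊤ : Submodule (MvPowerSeries (Fin f) 𝔽) M) := by
    intro n x hx
    refine Submodule.smul_induction_on hx ?_ ?_
    · intro r hr y _
      have hr' : r ∈ Ideal.span (⇑φ '' ((mIdeal 𝔽 f ^ (n + 1) : Ideal _) : Set _)) :=
        key 𝔽 p f hp φ hφ n hr
      refine Submodule.span_induction
        (p := fun r _ => ∀ y : M, ψ (r • y) ∈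
          (mIdeal 𝔽 f ^ (n + 1)) • (⊤ : Submodule (MvPowerSeries (Fin f) 𝔽) M))
        ?_ ?_ ?_ ?_ hr' y
      · rintro _ ⟨c, hc, rfl⟩ y
        rw [hψ]
        exact Submodule.smul_mem_smul hc Submodule.mem_top
      · intro y
        rw [zero_smul, map_zero]
        exact Submodule.zero_mem _
      · intro r s _ _ h1 h2 y
        rw [add_smul, map_add]
        exact Submodule.add_mem _ (h1 y) (h2 y)
      · intro a r _ h y
        have : (a • r) • y = r • (a • y) := by
          rw [smul_eq_mul, mul_comm, mul_smul]
        rw [this]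
        exact h (a • y)
    · intro x y h1 h2
      rw [map_add]
      exact Submodule.add_mem _ h1 h2
  refine ⟨part1, ?_⟩
  intro n hn x hx
  set q : ℕ := (n + p - 1) / p with hq
  set k : ℕ := q - f with hk
  rcases Nat.eq_zero_or_pos k with h0 | h1
  · rw [h0, pow_zero, Ideal.one_eq_top, Submodule.top_smul]
    exact Submodule.mem_top
  · have hqk : q = k + f := by omega
    have e1 : p * (k - 1) + p = p * k := by
      rw [← Nat.mul_succ, Nat.succ_eq_add_one, Nat.sub_add_cancel h1]
    have e2 : p * k + p * f = p * q := by rw [hqk, Nat.mul_add]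
    have e3 : q * p ≤ n + p - 1 := Nat.div_mul_le_self _ _
    have e4 : p * q = q * p := mul_comm p q
    have hfp : f ≤ p * f := Nat.le_mul_of_pos_left f hp.pos
    have hp2 : 2 ≤ p := hp.two_le
    have hf1 : 1 ≤ f := NeZero.one_le
    have hle : p * f - (f - 1) + p * (k - 1) ≤ n := by omega
    have hx' : x ∈ (mIdeal 𝔽 f ^ (p * f - (f - 1) + p * (k - 1))) •
        (⊤ : Submodule (MvPowerSeries (Fin f) 𝔽) M) :=
      Submodule.smul_mono_left (Ideal.pow_le_pow_right hle) hx
    have := part1 (k - 1) x hx'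
    rwa [Nat.sub_add_cancel h1] at this

end BHHMS
end
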